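/- For every 1 ≤ i ≤ mn one has β_i ∈ Π^{(i−1)} (so that the odd reflection r̂_{β_i} can indeed be applied to Π^{(i−1)}), and −β_i ∈ Π^{(i)}. Consequently there is a well-defined chain of mn simple root systems Π^{(1)}, …, Π^{(mn)} in which each Π^{(i)} arises from Π^{(i−1)} by the odd reflection at β_i. -/
import Mathlib


open scoped BigOperators

noncomputable section

/-- The weight space of `GL(m|n)` with rational coefficients. -/
abbrev Vmn (m n : ℕ) := (Fin m ⊕ Fin n) → ℚ

/-- `dd m n s` is the basis vector `δ_{s+1}` (0-indexed `s`). -/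
def dd (m n : ℕ) (s : ℕ) : Vmn m n := fun x =>
  match x with
  | Sum.inl a => if (a : ℕ) = s then 1 else 0
  | Sum.inr _ => 0

/-- `ee m n t` is the basis vector `ε_{t+1}` (0-indexed `t`). -/
def ee (m n : ℕ) (t : ℕ) : Vmn m n := fun x =>
  match x with
  | Sum.inl _ => 0
  | Sum.inr b => if (b : ℕ) = t then 1 else 0

/-- The symmetric bilinear form with `(δ_i,δ_j) = δ_{ij}`, `(ε_i,ε_j) = -δ_{ij}`,
`(δ_i,ε_j) = 0`. -/
def Bform (m n : ℕ) (f g : Vmn m n) : ℚ :=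
  (∑ a : Fin m, f (Sum.inl a) * g (Sum.inl a))
    - ∑ b : Fin n, f (Sum.inr b) * g (Sum.inr b)

/-- The `i`-th positive odd root (for `1 ≤ i ≤ mn`): `β_{kn+l} = δ_{m-k} - ε_l`. -/
def betaRoot (m n : ℕ) (i : ℕ) : Vmn m n :=
  dd m n (m - 1 - (i - 1) / n) - ee m n ((i - 1) % n)

/-- The standard simple system
`Π = {δ_1-δ_2, …, δ_{m-1}-δ_m, δ_m-ε_1, ε_1-ε_2, …, ε_{n-1}-ε_n}`. -/
def stdSimple (m n : ℕ) : Set (Vmn m n) :=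
  {v | ∃ s, s + 1 < m ∧ v = dd m n s - dd m n (s + 1)} ∪
    {dd m n (m - 1) - ee m n 0} ∪
    {v | ∃ t, t + 1 < n ∧ v = ee m n t - ee m n (t + 1)}

/-- The odd reflection `r̂_β` applied to a set `S`. -/
def oddRefl (m n : ℕ) (β : Vmn m n) (S : Set (Vmn m n)) : Set (Vmn m n) :=
  {α | α ∈ S ∧ α ≠ β ∧ Bform m n α β = 0} ∪
    {γ | ∃ α ∈ S, Bform m n α β ≠ 0 ∧ γ = α + β} ∪
    {-β}

/-- `simpleSys m n i = Π^{(i)}`, obtained from `Π` by the odd reflections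
`r̂_{β_1}, …, r̂_{β_i}`. -/
def simpleSys (m n : ℕ) : ℕ → Set (Vmn m n)
  | 0 => stdSimple m n
  | i + 1 => oddRefl m n (betaRoot m n (i + 1)) (simpleSys m n i)


lemma sum_ind2 (m : ℕ) (s s' : ℕ) :
    (∑ a : Fin m, (if (a : ℕ) = s then (1:ℚ) else 0) * (if (a : ℕ) = s' then 1 else 0))
      = if s = s' ∧ s < m then 1 else 0 := by
  have key : ∀ a : Fin m, (if (a : ℕ) = s then (1:ℚ) else 0) * (if (a : ℕ) = s' then 1 else 0)
      = if (a : ℕ) = s ∧ (a : ℕ) = s' then 1 else 0 := by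
    intro a; by_cases h1 : (a : ℕ) = s <;> by_cases h2 : (a : ℕ) = s' <;> simp [h1, h2]
  rw [Finset.sum_congr rfl fun a _ => key a]
  by_cases hss : s = s' ∧ s < m
  · rw [if_pos hss]
    rw [Finset.sum_eq_single (⟨s, hss.2⟩ : Fin m)]
    · simp [hss.1]
    · intro b _ hb
      rw [if_neg]
      rintro ⟨h1, _⟩
      exact hb (Fin.ext h1)
    · simp
  · rw [if_neg hss]
    apply Finset.sum_eq_zero
    intro a _
    rw [if_neg]
    rintro ⟨h1, h2⟩
    exact hss ⟨by omega, by omega⟩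

@[simp] lemma dd_inl (m n s : ℕ) (a : Fin m) :
    dd m n s (Sum.inl a) = if (a : ℕ) = s then 1 else 0 := rfl
@[simp] lemma dd_inr (m n s : ℕ) (b : Fin n) : dd m n s (Sum.inr b) = 0 := rfl
@[simp] lemma ee_inl (m n t : ℕ) (a : Fin m) : ee m n t (Sum.inl a) = 0 := rfl
@[simp] lemma ee_inr (m n t : ℕ) (b : Fin n) :
    ee m n t (Sum.inr b) = if (b : ℕ) = t then 1 else 0 := rfl

lemma Bform_dd_dd (m n s s' : ℕ) :
    Bform m n (dd m n s) (dd m n s') = if s = s' ∧ s < m then 1 else 0 := by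
  simp only [Bform, dd_inl, dd_inr, mul_zero, Finset.sum_const_zero, sub_zero, sum_ind2]

lemma Bform_ee_ee (m n t t' : ℕ) :
    Bform m n (ee m n t) (ee m n t') = if t = t' ∧ t < n then -1 else 0 := by
  simp only [Bform, ee_inl, ee_inr, zero_mul, Finset.sum_const_zero, zero_sub, sum_ind2]
  split_ifs <;> simp

lemma Bform_dd_ee (m n s t : ℕ) : Bform m n (dd m n s) (ee m n t) = 0 := by
  simp [Bform]

lemma Bform_ee_dd (m n t s : ℕ) : Bform m n (ee m n t) (dd m n s) = 0 := by
  simp [Bform]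

lemma Bform_sub_left (m n : ℕ) (f g h : Vmn m n) :
    Bform m n (f - g) h = Bform m n f h - Bform m n g h := by
  unfold Bform
  simp only [Pi.sub_apply, sub_mul, Finset.sum_sub_distrib]
  ring

lemma Bform_sub_right (m n : ℕ) (f g h : Vmn m n) :
    Bform m n f (g - h) = Bform m n f g - Bform m n f h := by
  unfold Bform
  simp only [Pi.sub_apply, mul_sub, Finset.sum_sub_distrib]
  ring

lemma Bform_neg_left (m n : ℕ) (f g : Vmn m n) :
    Bform m n (-f) g = -Bform m n f g := by
  unfold Bform
  simp only [Pi.neg_apply, neg_mul, Finset.sum_neg_distrib]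
  ring

/-- The invariant carried through the odd reflections: the listed elements all
belong to `Π^{(i)}`. -/
def OddInv (m n i : ℕ) : Prop :=
  (dd m n (m - 1 - i / n) - ee m n (i % n) ∈ simpleSys m n i) ∧
  (∀ t, t + 1 < n → t + 1 ≠ i % n →
    ee m n t - ee m n (t + 1) ∈ simpleSys m n i) ∧
  (∀ s, s + 2 ≤ m - 1 - i / n → dd m n s - dd m n (s + 1) ∈ simpleSys m n i) ∧
  (i % n = 0 → ∀ s, s + 1 ≤ m - 1 - i / n →
    dd m n s - dd m n (s + 1) ∈ simpleSys m n i) ∧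
  (1 ≤ i % n → 1 ≤ m - 1 - i / n →
    dd m n (m - 1 - i / n - 1) - ee m n 0 ∈ simpleSys m n i) ∧
  (1 ≤ i % n → -(dd m n (m - 1 - i / n) - ee m n (i % n - 1)) ∈ simpleSys m n i)

lemma baseInv (m n : ℕ) (hm : 1 ≤ m) (hn : 1 ≤ n) : OddInv m n 0 := by
  unfold OddInv
  simp only [Nat.zero_div, Nat.zero_mod]
  refine ⟨?_, ?_, ?_, ?_, ?_, ?_⟩
  · exact Or.inl (Or.inr rfl)
  · intro t ht _; exact Or.inr ⟨t, ht, rfl⟩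
  · intro s hs; exact Or.inl (Or.inl ⟨s, by omega, rfl⟩)
  · intro _ s hs; exact Or.inl (Or.inl ⟨s, by omega, rfl⟩)
  · intro habs; exact absurd habs (by omega)
  · intro habs; exact absurd habs (by omega)

lemma stepInv (m n : ℕ) (hm : 1 ≤ m) (hn : 1 ≤ n) (i : ℕ) (hi : i + 1 < m * n)
    (h : OddInv m n i) : OddInv m n (i + 1) := by
  unfold OddInv at h ⊢
  have hln : i % n < n := Nat.mod_lt _ hn
  have hil : n * (i / n) + i % n = i := Nat.div_add_mod i n
  generalize hk : i / n = k at h hil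
  generalize hl : i % n = l at h hil hln
  generalize hq : m - 1 - k = q at h
  obtain ⟨hHead, hE, hD1, hD0, hH1, hM⟩ := h
  have hkm : k < m := by
    by_contra hcon
    have e1 : n * m ≤ n * k := Nat.mul_le_mul_left n (by omega)
    have e2 : m * n = n * m := by ring
    omega
  have hqm : q < m := by omega
  have hbeta : betaRoot m n (i + 1) = dd m n q - ee m n l := by
    rw [betaRoot, Nat.add_sub_cancel, hk, hl, hq]
  have hSS : simpleSys m n (i + 1)
      = oddRefl m n (dd m n q - ee m n l) (simpleSys m n i) := by
    rw [show simpleSys m n (i + 1)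
        = oddRefl m n (betaRoot m n (i + 1)) (simpleSys m n i) from rfl, hbeta]
  have inj1 : ∀ α, α ∈ simpleSys m n i → α ≠ dd m n q - ee m n l →
      Bform m n α (dd m n q - ee m n l) = 0 → α ∈ simpleSys m n (i + 1) := by
    intro α h1 h2 h3; rw [hSS]; exact Or.inl (Or.inl ⟨h1, h2, h3⟩)
  have inj2 : ∀ α γ, α ∈ simpleSys m n i →
      Bform m n α (dd m n q - ee m n l) ≠ 0 →
      γ = α + (dd m n q - ee m n l) → γ ∈ simpleSys m n (i + 1) := by
    intro α γ h1 h2 h3; rw [hSS]; exact Or.inl (Or.inr ⟨α, h1, h2, h3⟩)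
  have inj3 : -(dd m n q - ee m n l) ∈ simpleSys m n (i + 1) := by
    rw [hSS]; exact Or.inr rfl
  -- non-equality helpers
  have neq1 : ∀ t t' : ℕ, ee m n t - ee m n t' ≠ dd m n q - ee m n l := by
    intro t t' hcon
    have := congrFun hcon (Sum.inl ⟨q, hqm⟩)
    simp at this
  have neq2 : ∀ s s' : ℕ, dd m n s - dd m n (s + 1) ≠ dd m n q - ee m n l := by
    intro s s' hcon
    have := congrFun hcon (Sum.inr ⟨l, hln⟩)
    simp at this
  have neq3 : ∀ s : ℕ, s ≠ q → dd m n s - ee m n 0 ≠ dd m n q - ee m n l := by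
    intro s hs hcon
    have := congrFun hcon (Sum.inl ⟨q, hqm⟩)
    simp [Ne.symm hs] at this
  -- the head element for the next row
  have headLemma : 1 ≤ q → dd m n (q - 1) - ee m n 0 ∈ simpleSys m n (i + 1) := by
    intro hq1
    by_cases hl0 : l = 0
    · have hmem := hD0 hl0 (q - 1) (by omega)
      have e : q - 1 + 1 = q := by omega
      rw [e] at hmem
      refine inj2 _ _ hmem ?_ ?_
      · simp only [Bform_sub_left, Bform_sub_right, Bform_dd_dd, Bform_dd_ee,
          Bform_ee_dd, Bform_ee_ee, eq_self_iff_true, true_and]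
        split_ifs <;> first | (exfalso; omega) | norm_num
      · rw [hl0]; abel
    · have hmem := hH1 (by omega) hq1
      refine inj1 _ hmem (neq3 (q - 1) (by omega)) ?_
      simp only [Bform_sub_left, Bform_sub_right, Bform_dd_dd, Bform_dd_ee,
        Bform_ee_dd, Bform_ee_ee, eq_self_iff_true, true_and]
      split_ifs <;> first | (exfalso; omega) | norm_num
  -- the epsilon chain elements
  have eLemma : ∀ t, t + 1 < n → t ≠ l →
      ee m n t - ee m n (t + 1) ∈ simpleSys m n (i + 1) := by
    intro t ht1 ht2
    by_cases htl : t + 1 = l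
    · have hm' := hM (by omega)
      have hll : l - 1 = t := by omega
      rw [hll] at hm'
      refine inj2 _ _ hm' ?_ ?_
      · simp only [Bform_neg_left, Bform_sub_left, Bform_sub_right, Bform_dd_dd,
          Bform_dd_ee, Bform_ee_dd, Bform_ee_ee, eq_self_iff_true, true_and]
        split_ifs <;> first | (exfalso; omega) | norm_num
      · rw [← htl]; abel
    · refine inj1 _ (hE t ht1 htl) (neq1 t (t + 1)) ?_
      simp only [Bform_sub_left, Bform_sub_right, Bform_dd_dd, Bform_dd_ee,
        Bform_ee_dd, Bform_ee_ee, eq_self_iff_true, true_and]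
      split_ifs <;> first | (exfalso; omega) | norm_num
  -- the delta chain elements
  have dLemma : ∀ s, s + 2 ≤ q →
      dd m n s - dd m n (s + 1) ∈ simpleSys m n (i + 1) := by
    intro s hs
    refine inj1 _ (hD1 s hs) (neq2 s (s + 1)) ?_
    simp only [Bform_sub_left, Bform_sub_right, Bform_dd_dd, Bform_dd_ee,
      Bform_ee_dd, Bform_ee_ee, eq_self_iff_true, true_and]
    split_ifs <;> first | (exfalso; omega) | norm_num
  by_cases hc : l + 1 < n
  · -- stay within the same row
    have hA : (i + 1) / n = k ∧ (i + 1) % n = l + 1 :=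
      (Nat.div_mod_unique hn).2 ⟨by omega, hc⟩
    rw [hA.1, hA.2, hq]
    refine ⟨?_, ?_, ?_, ?_, ?_, ?_⟩
    · -- new head   dd q - ee (l+1)
      refine inj2 _ _ (hE l hc (by omega)) ?_ ?_
      · simp only [Bform_sub_left, Bform_sub_right, Bform_dd_dd, Bform_dd_ee,
          Bform_ee_dd, Bform_ee_ee, eq_self_iff_true, true_and]
        split_ifs <;> first | (exfalso; omega) | norm_num
      · abel
    · intro t ht1 ht2; exact eLemma t ht1 (by omega)
    · intro s hs; exact dLemma s hs
    · intro habs; exact absurd habs (by omega)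
    · intro _ hq1
      exact headLemma hq1
    · intro _
      simp only [Nat.add_sub_cancel]
      exact inj3
  · -- move to the next row
    have hB : (i + 1) / n = k + 1 ∧ (i + 1) % n = 0 := by
      refine (Nat.div_mod_unique hn).2 ⟨?_, hn⟩
      have e : n * (k + 1) = n * k + n := by ring
      omega
    have hkm2 : k + 1 < m := by
      by_contra hcon
      have e1 : n * (k + 1) = n * k + n := by ring
      have e2 : m * n = n * m := by ring
      have e3 : n * m ≤ n * (k + 1) := Nat.mul_le_mul_left n (by omega)
      omega
    have hq1 : 1 ≤ q := by omega
    rw [hB.1, hB.2]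
    have hqq : m - 1 - (k + 1) = q - 1 := by omega
    rw [hqq]
    refine ⟨?_, ?_, ?_, ?_, ?_, ?_⟩
    · exact headLemma hq1
    · intro t ht1 _; exact eLemma t ht1 (by omega)
    · intro s hs; exact dLemma s (by omega)
    · intro _ s hs; exact dLemma s (by omega)
    · intro habs; exact absurd habs (by omega)
    · intro habs; exact absurd habs (by omega)

/-- For every `1 ≤ i ≤ mn`, the root `β_i` belongs to `Π^{(i-1)}` (so the odd reflection
`r̂_{β_i}` can indeed be applied to `Π^{(i-1)}`), and `-β_i` belongs to `Π^{(i)}`.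
Consequently the chain `Π^{(1)}, …, Π^{(mn)}` of simple root systems is well defined,
each `Π^{(i)}` arising from `Π^{(i-1)}` by the odd reflection at `β_i`. -/
theorem statement1 (m n : ℕ) (hm : 1 ≤ m) (hn : 1 ≤ n) :
    ∀ i : ℕ, 1 ≤ i → i ≤ m * n →
      betaRoot m n i ∈ simpleSys m n (i - 1) ∧ -betaRoot m n i ∈ simpleSys m n i := by
  have inv : ∀ j, j < m * n → OddInv m n j := by
    intro j
    induction j with
    | zero => intro _; exact baseInv m n hm hn
    | succ p ih => intro hp; exact stepInv m n hm hn p hp (ih (by omega))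
  intro i h1 h2
  constructor
  · exact (inv (i - 1) (by omega)).1
  · have he : i = (i - 1) + 1 := by omega
    rw [he]
    exact Or.inr rfl
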